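/- Let D be a probability distribution on functions g : Fin 3 → Bool such that for all i ≠ j in Fin 3 and all b, b' ∈ Bool, ∑ of D g over all g with g i = b and g j = b' equals 1/4. Then for every g : Fin 3 → Bool: if the number of indices i with g i = true is odd, then D g = D(const true), and if that number is even, then D g = 1/4 − D(const true), where const true denotes the constant-true function. -/

import Mathlib

/-- `p` is a probability distribution on functions `A → B`. -/
def IsProbDist {A B : Type*} [Fintype A] [DecidableEq A] [Fintype B]
    (p : (A → B) → ℝ) : Prop :=
  (∀ f, 0 ≤ p f) ∧ (∑ f, p f) = 1

def e3 : (Bool × Bool × Bool) ≃ (Fin 3 → Bool) :=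
  ⟨fun p => ![p.1, p.2.1, p.2.2], fun g => (g 0, g 1, g 2), by decide, by decide⟩

lemma expand3 (F : (Fin 3 → Bool) → ℝ) :
    (∑ g : Fin 3 → Bool, F g) =
      F ![false,false,false] + F ![false,false,true] + F ![false,true,false] +
      F ![false,true,true] + F ![true,false,false] + F ![true,false,true] +
      F ![true,true,false] + F ![true,true,true] := by
  rw [← Equiv.sum_comp e3]
  simp [Fintype.sum_prod_type, e3]
  ring

theorem uniform_twoWay_marginals_determine_parity_form
    (D : (Fin 3 → Bool) → ℝ) (hD : IsProbDist D)
    (h : ∀ i j : Fin 3, i ≠ j → ∀ b b' : Bool,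
      (∑ g : Fin 3 → Bool, if g i = b ∧ g j = b' then D g else 0) = 1/4) :
    ∀ g : Fin 3 → Bool,
      (Odd (Finset.univ.filter fun i => g i = true).card →
        D g = D (fun _ => true)) ∧
      (Even (Finset.univ.filter fun i => g i = true).card →
        D g = 1/4 - D (fun _ => true)) := by
  have h01ff := h 0 1 (by decide) false false
  have h01ft := h 0 1 (by decide) false true
  have h01tf := h 0 1 (by decide) true false
  have h01tt := h 0 1 (by decide) true true
  have h02ff := h 0 2 (by decide) false false
  have h02ft := h 0 2 (by decide) false true
  have h02tf := h 0 2 (by decide) true false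
  have h02tt := h 0 2 (by decide) true true
  have h12ff := h 1 2 (by decide) false false
  have h12ft := h 1 2 (by decide) false true
  have h12tf := h 1 2 (by decide) true false
  have h12tt := h 1 2 (by decide) true true
  rw [expand3] at h01ff h01ft h01tf h01tt h02ff h02ft h02tf h02tt h12ff h12ft h12tf h12tt
  norm_num [Matrix.cons_val_two, Matrix.tail_cons, Matrix.head_cons] at h01ff h01ft h01tf h01tt h02ff h02ft h02tf h02tt h12ff h12ft h12tf h12tt
  have hc : (fun _ : Fin 3 => true) = ![true,true,true] := by decide
  rw [hc]
  intro g
  have hg : g = ![g 0, g 1, g 2] := by funext i; fin_cases i <;> rfl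
  rw [hg]
  cases hb0 : g 0 <;> cases hb1 : g 1 <;> cases hb2 : g 2 <;>
    constructor <;> intro hp <;>
    first
      | linarith
      | (exfalso; revert hp; decide)
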